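/- Let U*_1 ∈ ℝ^{n×K} be the matrix whose k-th column is (1/√n_k)1_{G_k}. Let Δ ∈ ℝ^{n×K} be any matrix whose k-th column is supported on G_k (i.e., its entries vanish outside G_k) for every k. Then ‖Δ (U*_1)ᵀ 1_n + U*_1 Δᵀ 1_n‖² ≥ (min_{k∈[K]} n_k) · ‖Δ‖_F², where the norm on the left is the Euclidean norm on ℝ^n. -/

import Mathlib

open Matrix Finset

/-- Indicator vector of a finset. -/
noncomputable def indVec {n : ℕ} (S : Finset (Fin n)) : Fin n → ℝ :=
  fun i => if i ∈ S then 1 else 0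

/-- The all-ones vector in `ℝ^n`. -/
noncomputable def ones (n : ℕ) : Fin n → ℝ := fun _ => 1

/-- Let `U*₁ ∈ ℝ^{n×K}` have `k`-th column `(1/√n_k) 1_{G_k}`, and let
`Δ ∈ ℝ^{n×K}` have its `k`-th column supported on `G_k`.  Then
`‖Δ(U*₁)ᵀ1 + U*₁Δᵀ1‖² ≥ (min_k n_k) ‖Δ‖_F²`. -/
theorem block_diagonal_coercivity {n K : ℕ} (hK : 0 < K)
    (G : Fin K → Finset (Fin n))
    (hpart : ∀ i : Fin n, ∃! k : Fin K, i ∈ G k)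
    (hne : ∀ k, (G k).Nonempty)
    (Ustar : Matrix (Fin n) (Fin K) ℝ)
    (hUstar : ∀ i k, Ustar i k = (Real.sqrt ((G k).card : ℝ))⁻¹ * indVec (G k) i)
    (Δ : Matrix (Fin n) (Fin K) ℝ)
    (hΔ : ∀ k : Fin K, ∀ i : Fin n, Δ i k ≠ 0 → i ∈ G k) :
    (Finset.univ.inf' ⟨⟨0, hK⟩, Finset.mem_univ _⟩ fun k => ((G k).card : ℝ)) *
        (∑ i, ∑ k, (Δ i k) ^ 2) ≤
      ∑ i, (((Δ * Ustarᵀ).mulVec (ones n) + (Ustar * Δᵀ).mulVec (ones n)) i) ^ 2 := by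
  classical
  set m := (Finset.univ.inf' ⟨⟨0, hK⟩, Finset.mem_univ _⟩ fun k => ((G k).card : ℝ)) with hm
  set c : Fin n → Fin K := fun i => (hpart i).choose with hcdef
  have hc : ∀ i, i ∈ G (c i) := fun i => (hpart i).choose_spec.1
  have huniq : ∀ i k, i ∈ G k → c i = k := fun i k h => ((hpart i).choose_spec.2 k h).symm
  have hcard : ∀ k, (0:ℝ) < ((G k).card : ℝ) := fun k => by
    exact_mod_cast Finset.card_pos.mpr (hne k)
  have hsqpos : ∀ k, 0 < Real.sqrt ((G k).card : ℝ) := fun k => Real.sqrt_pos.mpr (hcard k)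
  have hsq : ∀ k, Real.sqrt ((G k).card : ℝ) * Real.sqrt ((G k).card : ℝ) = ((G k).card : ℝ) :=
    fun k => Real.mul_self_sqrt (le_of_lt (hcard k))
  set s : Fin K → ℝ := fun k => ∑ i ∈ G k, Δ i k with hs
  -- Δ i k = 0 for k ≠ c i
  have hΔzero : ∀ i k, k ≠ c i → Δ i k = 0 := by
    intro i k hk
    by_contra h
    exact hk ((huniq i k (hΔ k i h)).symm ▸ rfl)
  -- column sums of Ustar
  have hcolsum : ∀ k, (∑ j, Ustar j k) = Real.sqrt ((G k).card : ℝ) := by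
    intro k
    simp only [hUstar, indVec, mul_ite, mul_one, mul_zero]
    rw [Finset.sum_ite_mem, Finset.univ_inter, Finset.sum_const, nsmul_eq_mul,
      mul_inv_eq_iff_eq_mul₀ (ne_of_gt (hsqpos k))]
    exact (hsq k).symm
  -- column sums of Δ
  have hΔsum : ∀ k, (∑ j, Δ j k) = s k := by
    intro k
    rw [hs]
    refine (Finset.sum_subset (Finset.subset_univ _) ?_).symm
    intro j _ hj
    by_contra h
    exact hj (hΔ k j h)
  -- the vector entries
  have hv : ∀ i, ((Δ * Ustarᵀ).mulVec (ones n) + (Ustar * Δᵀ).mulVec (ones n)) i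
      = Real.sqrt ((G (c i)).card : ℝ) * Δ i (c i)
        + (Real.sqrt ((G (c i)).card : ℝ))⁻¹ * s (c i) := by
    intro i
    have h1 : (Δ * Ustarᵀ).mulVec (ones n) i = ∑ k, Δ i k * Real.sqrt ((G k).card : ℝ) := by
      simp only [mulVec, dotProduct, mul_apply, ones, transpose_apply, mul_one]
      rw [Finset.sum_comm]
      refine Finset.sum_congr rfl fun k _ => ?_
      rw [← Finset.mul_sum, hcolsum k]
    have h2 : (Ustar * Δᵀ).mulVec (ones n) i = ∑ k, Ustar i k * s k := by
      simp only [mulVec, dotProduct, mul_apply, ones, transpose_apply, mul_one]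
      rw [Finset.sum_comm]
      refine Finset.sum_congr rfl fun k _ => ?_
      rw [← Finset.mul_sum, hΔsum k]
    have h1' : ∑ k, Δ i k * Real.sqrt ((G k).card : ℝ)
        = Δ i (c i) * Real.sqrt ((G (c i)).card : ℝ) := by
      refine Finset.sum_eq_single _ (fun k _ hk => by rw [hΔzero i k hk, zero_mul])
        (fun h => absurd (Finset.mem_univ _) h)
    have h2' : ∑ k, Ustar i k * s k = (Real.sqrt ((G (c i)).card : ℝ))⁻¹ * s (c i) := by
      have e1 : ∑ k, Ustar i k * s k = Ustar i (c i) * s (c i) := by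
        refine Finset.sum_eq_single _ (fun k _ hk => ?_) (fun h => absurd (Finset.mem_univ _) h)
        have : i ∉ G k := fun h => hk (huniq i k h).symm
        rw [hUstar, indVec, if_neg this, mul_zero, zero_mul]
      rw [e1, hUstar, indVec, if_pos (hc i), mul_one]
    simp only [Pi.add_apply, h1, h2, h1', h2']
    ring
  -- group RHS by fibers
  have hfiber : ∀ k, G k = Finset.univ.filter (fun i => c i = k) := by
    intro k; ext i
    simp only [mem_filter, mem_univ, true_and]
    exact ⟨fun h => huniq i k h, fun h => h ▸ hc i⟩
  have hRHS : ∑ i, (((Δ * Ustarᵀ).mulVec (ones n) + (Ustar * Δᵀ).mulVec (ones n)) i) ^ 2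
      = ∑ k, ∑ i ∈ G k,
          (Real.sqrt ((G k).card : ℝ) * Δ i k + (Real.sqrt ((G k).card : ℝ))⁻¹ * s k) ^ 2 := by
    rw [← Finset.sum_fiberwise Finset.univ c
      (fun i => (((Δ * Ustarᵀ).mulVec (ones n) + (Ustar * Δᵀ).mulVec (ones n)) i) ^ 2)]
    refine Finset.sum_congr rfl fun k _ => ?_
    rw [← hfiber k]
    refine Finset.sum_congr rfl fun i hi => ?_
    have hci : c i = k := huniq i k hi
    rw [hv i, hci]
  -- per-block expansion
  have hblock : ∀ k, ∑ i ∈ G k,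
      (Real.sqrt ((G k).card : ℝ) * Δ i k + (Real.sqrt ((G k).card : ℝ))⁻¹ * s k) ^ 2
      = ((G k).card : ℝ) * (∑ i ∈ G k, (Δ i k) ^ 2) + 3 * (s k) ^ 2 := by
    intro k
    have hne' : Real.sqrt ((G k).card : ℝ) ≠ 0 := ne_of_gt (hsqpos k)
    have expand : ∀ i ∈ G k,
        (Real.sqrt ((G k).card : ℝ) * Δ i k + (Real.sqrt ((G k).card : ℝ))⁻¹ * s k) ^ 2
        = ((G k).card : ℝ) * (Δ i k) ^ 2 + 2 * (Δ i k * s k)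
          + ((G k).card : ℝ)⁻¹ * (s k) ^ 2 := by
      intro i _
      have h1 : Real.sqrt ((G k).card : ℝ) * (Real.sqrt ((G k).card : ℝ))⁻¹ = 1 :=
        mul_inv_cancel₀ hne'
      have h2 : (Real.sqrt ((G k).card : ℝ))⁻¹ * (Real.sqrt ((G k).card : ℝ))⁻¹
          = ((G k).card : ℝ)⁻¹ := by
        rw [← mul_inv, hsq k]
      ring_nf
      rw [← hsq k]
      rw [Real.sqrt_mul_self (Real.sqrt_nonneg _)]
      linear_combination (Δ i k * s k * 2) * h1
    rw [Finset.sum_congr rfl expand]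
    rw [Finset.sum_add_distrib, Finset.sum_add_distrib, Finset.sum_const, ← Finset.mul_sum,
      ← Finset.mul_sum, nsmul_eq_mul]
    have : (∑ i ∈ G k, Δ i k * s k) = s k * s k := by
      rw [← Finset.sum_mul]
    rw [this]
    have hc0 : ((G k).card : ℝ) ≠ 0 := ne_of_gt (hcard k)
    field_simp
    ring
  -- LHS decomposition
  have hLHS : (∑ i, ∑ k, (Δ i k) ^ 2) = ∑ k, ∑ i ∈ G k, (Δ i k) ^ 2 := by
    rw [Finset.sum_comm]
    refine Finset.sum_congr rfl fun k _ => ?_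
    refine (Finset.sum_subset (Finset.subset_univ _) fun j _ hj => ?_).symm
    have : Δ j k = 0 := by
      by_contra h; exact hj (hΔ k j h)
    rw [this]; ring
  rw [hRHS, hLHS, Finset.mul_sum]
  refine Finset.sum_le_sum fun k _ => ?_
  rw [hblock k]
  have hmle : m ≤ ((G k).card : ℝ) := Finset.inf'_le _ (Finset.mem_univ k)
  have hT : 0 ≤ ∑ i ∈ G k, (Δ i k) ^ 2 := Finset.sum_nonneg fun i _ => sq_nonneg _
  nlinarith [sq_nonneg (s k)]
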